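/- Let η1=(1,0), η2=(1/2,√3/2), η3=η1−η2, and fix s∈(0,1) and J_∞>0. Let J:[0,∞)→[0,∞) be continuous with lim_{z→0+}J(z)=+∞ and lim_{z→+∞}J(z)=J_∞. Define Ĵ(A)=∑_{k=1}^3 J(|Aηk|) for A a real 2×2 matrix. Then the sublevel set K={A : Ĵ(A) ≤ s·J_∞} is a compact subset of the 2×2 real matrices. -/

import Mathlib

noncomputable section
open Real Set Filter Matrix

def nrm (v : ℝ × ℝ) : ℝ := Real.sqrt (v.1 ^ 2 + v.2 ^ 2)
def eta1 : ℝ × ℝ := (1, 0)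
def eta2 : ℝ × ℝ := (1 / 2, Real.sqrt 3 / 2)
def eta3 : ℝ × ℝ := eta1 - eta2

def mvec (A : Matrix (Fin 2) (Fin 2) ℝ) (v : ℝ × ℝ) : ℝ × ℝ :=
  (A 0 0 * v.1 + A 0 1 * v.2, A 1 0 * v.1 + A 1 1 * v.2)

/-- Ĵ(A) = ∑ₖ J(|Aηₖ|). -/
def Jhat (J : ℝ → ℝ) (A : Matrix (Fin 2) (Fin 2) ℝ) : ℝ :=
  J (nrm (mvec A eta1)) + J (nrm (mvec A eta2)) + J (nrm (mvec A eta3))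

lemma abs_le_of_sq (a b : ℝ) (hb : 0 ≤ b) (h : a ^ 2 ≤ b ^ 2) : -b ≤ a ∧ a ≤ b := by
  constructor <;> nlinarith [sq_nonneg (a + b), sq_nonneg (a - b)]

lemma nrm_nonneg (v : ℝ × ℝ) : 0 ≤ nrm v := Real.sqrt_nonneg _

lemma cont_nrm_mvec (v : ℝ × ℝ) :
    Continuous fun A : Matrix (Fin 2) (Fin 2) ℝ => nrm (mvec A v) := by
  have he : ∀ i j : Fin 2, Continuous fun A : Matrix (Fin 2) (Fin 2) ℝ => A i j :=
    fun i j => continuous_id.matrix_elem i j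
  exact Real.continuous_sqrt.comp
    (((((he 0 0).mul continuous_const).add ((he 0 1).mul continuous_const)).pow 2).add
     ((((he 1 0).mul continuous_const).add ((he 1 1).mul continuous_const)).pow 2))

/-- Key per-term eventual estimate: near `A`, each term is either large or close to its value. -/
lemma aux_ev (J : ℝ → ℝ) (hJc : ContinuousOn J (Set.Ioi 0)) (c δ : ℝ) (hδpos : 0 < δ)
    (hδ : ∀ z ∈ Set.Ioo (0:ℝ) δ, c < J z)
    (f : Matrix (Fin 2) (Fin 2) ℝ → ℝ) (hf : Continuous f) (hfnn : ∀ A, 0 ≤ f A)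
    (A : Matrix (Fin 2) (Fin 2) ℝ) (ε : ℝ) (hε : 0 < ε) :
    ∀ᶠ B in nhds A, c < J (f B) ∨ |J (f B) - J (f A)| < ε := by
  rcases eq_or_lt_of_le (hfnn A) with h0 | hpos
  · have hev : ∀ᶠ B in nhds A, f B < δ :=
      hf.continuousAt.eventually_lt_const (by rw [← h0]; exact hδpos)
    filter_upwards [hev] with B hB
    rcases eq_or_lt_of_le (hfnn B) with hB0 | hBpos
    · right
      have : f B = f A := by rw [← hB0, ← h0]
      rw [this]
      simpa using hε
    · left; exact hδ (f B) ⟨hBpos, hB⟩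
  · have hJat : ContinuousAt J (f A) := hJc.continuousAt (Ioi_mem_nhds hpos)
    have h2 : ContinuousAt (fun B => J (f B)) A := hJat.comp hf.continuousAt
    have hball : ∀ᶠ y in nhds (J (f A)), |y - J (f A)| < ε := by
      filter_upwards [Metric.ball_mem_nhds (J (f A)) hε] with y hy
      simpa [Real.dist_eq] using hy
    exact (h2.eventually hball).mono fun B hB => Or.inr hB

theorem stmt_3 (J : ℝ → ℝ) (Jinf : ℝ) (hJinf : 0 < Jinf)
    (hJc : ContinuousOn J (Set.Ioi 0))
    (hJnn : ∀ z, 0 ≤ z → 0 ≤ J z) (hJ1 : J 1 = 0)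
    (hJ0 : Tendsto J (nhdsWithin 0 (Set.Ioi 0)) atTop)
    (hJtop : Tendsto J atTop (nhds Jinf))
    (s : ℝ) (hs : s ∈ Set.Ioo (0 : ℝ) 1) :
    IsCompact {A : Matrix (Fin 2) (Fin 2) ℝ | Jhat J A ≤ s * Jinf} := by
  obtain ⟨hs0, hs1⟩ := hs
  have hsJ : s * Jinf < Jinf := by nlinarith
  -- threshold at infinity
  obtain ⟨M0, hM0⟩ := eventually_atTop.mp (hJtop.eventually_const_lt hsJ)
  set M : ℝ := max M0 1 with hMdef
  have hM1 : (1:ℝ) ≤ M := le_max_right _ _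
  have hMpos : 0 < M := lt_of_lt_of_le one_pos hM1
  have hM : ∀ z, M ≤ z → s * Jinf < J z := fun z hz =>
    hM0 z (le_trans (le_max_left _ _) hz)
  -- threshold near zero
  obtain ⟨δ, hδpos, hδsub⟩ := mem_nhdsGT_iff_exists_Ioo_subset.mp
    (hJ0.eventually (eventually_gt_atTop (s * Jinf)))
  have hδ : ∀ z ∈ Set.Ioo (0:ℝ) δ, s * Jinf < J z := fun z hz => hδsub hz
  have hδpos' : (0:ℝ) < δ := hδpos
  -- nonnegativity of each term
  have hterm_nn : ∀ (A : Matrix (Fin 2) (Fin 2) ℝ) (v : ℝ × ℝ), 0 ≤ J (nrm (mvec A v)) :=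
    fun A v => hJnn _ (nrm_nonneg _)
  -- The set is closed
  have hclosed : IsClosed {A : Matrix (Fin 2) (Fin 2) ℝ | Jhat J A ≤ s * Jinf} := by
    have hU : IsOpen {A : Matrix (Fin 2) (Fin 2) ℝ | s * Jinf < Jhat J A} := by
      rw [isOpen_iff_mem_nhds]
      intro A hA
      simp only [Set.mem_setOf_eq] at hA
      set ε : ℝ := (Jhat J A - s * Jinf) / 3 with hεdef
      have hεpos : 0 < ε := by
        have : 0 < Jhat J A - s * Jinf := sub_pos.mpr hA
        positivity
      have e1 := aux_ev J hJc (s * Jinf) δ hδpos' hδ _ (cont_nrm_mvec eta1)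
        (fun B => nrm_nonneg _) A ε hεpos
      have e2 := aux_ev J hJc (s * Jinf) δ hδpos' hδ _ (cont_nrm_mvec eta2)
        (fun B => nrm_nonneg _) A ε hεpos
      have e3 := aux_ev J hJc (s * Jinf) δ hδpos' hδ _ (cont_nrm_mvec eta3)
        (fun B => nrm_nonneg _) A ε hεpos
      filter_upwards [e1, e2, e3] with B h1 h2 h3
      show s * Jinf < Jhat J B
      have n1 : 0 ≤ J (nrm (mvec B eta1)) := hterm_nn B eta1
      have n2 : 0 ≤ J (nrm (mvec B eta2)) := hterm_nn B eta2
      have n3 : 0 ≤ J (nrm (mvec B eta3)) := hterm_nn B eta3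
      have hAs : Jhat J A = s * Jinf + 3 * ε := by rw [hεdef]; ring
      replace h1 := h1.imp id abs_lt.mp
      replace h2 := h2.imp id abs_lt.mp
      replace h3 := h3.imp id abs_lt.mp
      simp only [Jhat] at hAs ⊢
      rcases h1 with h1 | ⟨h1a, h1b⟩ <;> rcases h2 with h2 | ⟨h2a, h2b⟩ <;>
        rcases h3 with h3 | ⟨h3a, h3b⟩ <;> linarith
    have heq : {A : Matrix (Fin 2) (Fin 2) ℝ | Jhat J A ≤ s * Jinf}
        = {A : Matrix (Fin 2) (Fin 2) ℝ | s * Jinf < Jhat J A}ᶜ := by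
      ext A; simp [not_lt]
    rw [heq]
    exact hU.isClosed_compl
  -- The compact box
  have hbox : IsCompact {A : Matrix (Fin 2) (Fin 2) ℝ | ∀ i j, A i j ∈ Icc (-(3*M)) (3*M)} := by
    have h : IsCompact (Set.pi (univ : Set (Fin 2))
        (fun _ => Set.pi (univ : Set (Fin 2)) (fun _ => Icc (-(3*M)) (3*M)))
        : Set (Fin 2 → Fin 2 → ℝ)) :=
      isCompact_univ_pi fun _ => isCompact_univ_pi fun _ => isCompact_Icc
    suffices hE : {A : Matrix (Fin 2) (Fin 2) ℝ | ∀ i j, A i j ∈ Icc (-(3*M)) (3*M)} = Set.pi (univ : Set (Fin 2))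
        (fun _ => Set.pi (univ : Set (Fin 2)) (fun _ => Icc (-(3*M)) (3*M))) by rw [hE]; exact h
    ext A
    constructor
    · intro hA i _ j _; exact hA i j
    · intro hA i j; exact hA i (Set.mem_univ i) j (Set.mem_univ j)
  -- inclusion in the box
  apply hbox.of_isClosed_subset hclosed
  intro A hA
  simp only [Set.mem_setOf_eq] at hA ⊢
  -- each norm is at most M
  have hbnd : ∀ v : ℝ × ℝ, J (nrm (mvec A v)) ≤ Jhat J A → nrm (mvec A v) ≤ M := by
    intro v hle
    by_contra h
    push_neg at h
    have := hM _ h.le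
    linarith
  have b1 : nrm (mvec A eta1) ≤ M := hbnd eta1 (by
    have := hterm_nn A eta2; have := hterm_nn A eta3; simp only [Jhat]; linarith)
  have b2 : nrm (mvec A eta2) ≤ M := hbnd eta2 (by
    have := hterm_nn A eta1; have := hterm_nn A eta3; simp only [Jhat]; linarith)
  have b3 : nrm (mvec A eta3) ≤ M := hbnd eta3 (by
    have := hterm_nn A eta1; have := hterm_nn A eta2; simp only [Jhat]; linarith)
  -- convert sqrt bounds to square bounds
  have sq_of : ∀ v : ℝ × ℝ, nrm (mvec A v) ≤ M →
      (mvec A v).1 ^ 2 + (mvec A v).2 ^ 2 ≤ M ^ 2 := by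
    intro v hv
    have hx : 0 ≤ (mvec A v).1 ^ 2 + (mvec A v).2 ^ 2 := by positivity
    rw [nrm] at hv
    nlinarith [Real.sq_sqrt hx, Real.sqrt_nonneg ((mvec A v).1 ^ 2 + (mvec A v).2 ^ 2)]
  have q1 := sq_of eta1 b1
  have q2 := sq_of eta2 b2
  set r : ℝ := Real.sqrt 3 with hr
  have hr2 : r ^ 2 = 3 := Real.sq_sqrt (by norm_num)
  have hr1 : (1:ℝ) ≤ r := by
    have h1 : (1:ℝ) = Real.sqrt 1 := Real.sqrt_one.symm
    rw [hr, h1]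
    exact Real.sqrt_le_sqrt (by norm_num)
  simp only [mvec, eta1, eta2, mul_one, mul_zero, add_zero, ← hr] at q1 q2
  have e00 : -M ≤ A 0 0 ∧ A 0 0 ≤ M :=
    abs_le_of_sq _ _ hMpos.le (by linarith [sq_nonneg (A 1 0)])
  have e10 : -M ≤ A 1 0 ∧ A 1 0 ≤ M :=
    abs_le_of_sq _ _ hMpos.le (by linarith [sq_nonneg (A 0 0)])
  have u1 : -M ≤ A 0 0 * (1 / 2) + A 0 1 * (r / 2) ∧ A 0 0 * (1 / 2) + A 0 1 * (r / 2) ≤ M :=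
    abs_le_of_sq _ _ hMpos.le (by linarith [sq_nonneg (A 1 0 * (1 / 2) + A 1 1 * (r / 2))])
  have u2 : -M ≤ A 1 0 * (1 / 2) + A 1 1 * (r / 2) ∧ A 1 0 * (1 / 2) + A 1 1 * (r / 2) ≤ M :=
    abs_le_of_sq _ _ hMpos.le (by linarith [sq_nonneg (A 0 0 * (1 / 2) + A 0 1 * (r / 2))])
  have key : ∀ x y : ℝ, -M ≤ x → x ≤ M → -M ≤ x * (1/2) + y * (r/2) →
      x * (1/2) + y * (r/2) ≤ M → -(3*M) ≤ y ∧ y ≤ 3*M := by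
    intro x y hx1 hx2 hy1 hy2
    constructor
    · rcases le_or_gt 0 y with h | h
      · linarith
      · linarith [mul_nonneg (sub_nonneg.mpr hr1) (neg_nonneg.mpr h.le)]
    · rcases le_or_gt 0 y with h | h
      · linarith [mul_nonneg (sub_nonneg.mpr hr1) h]
      · linarith
  have e01 := key _ _ e00.1 e00.2 u1.1 u1.2
  have e11 := key _ _ e10.1 e10.2 u2.1 u2.2
  intro i j
  fin_cases i <;> fin_cases j <;> simp only [Set.mem_Icc, Fin.zero_eta, Fin.mk_one]
  · exact ⟨by linarith [e00.1], by linarith [e00.2]⟩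
  · exact e01
  · exact ⟨by linarith [e10.1], by linarith [e10.2]⟩
  · exact e11
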